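/- There is a canonical surjective order-preserving ring homomorphism i from the finite part of Henle's ring onto B/o: letting F be the subring of Filter.Germ (Filter.cofinite : Filter ℕ) ℝ consisting of the finite elements (those r with −(n:ℝ) ≤ r ≤ (n:ℝ) for some natural n, where reals embed as constant germs), there exists a ring homomorphism i : F →+* B/o such that i sends the cofinite germ of every bounded sequence x to the class [x] in B/o, i is surjective, and i is order preserving: for bounded sequences x, y, if x n ≤ y n for all but finitely many n, then there exists z ∈ o with x n ≤ y n + z n for all sufficiently large n (i.e. [x] ≤ [y] in B/o). -/

import Mathlib

open Filter

/-- Henle's ring: germs of real sequences at the cofinite (Fréchet) filter on ℕ. -/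
abbrev HenleRing : Type := Filter.Germ (Filter.cofinite : Filter ℕ) ℝ

/-- The subring of finite elements of Henle's ring. -/
def HenleFinite : Subring HenleRing where
  carrier := {r : HenleRing | ∃ n : ℕ, -(((n : ℝ)) : HenleRing) ≤ r ∧ r ≤ (((n : ℝ)) : HenleRing)}
  zero_mem' := ⟨0, by
    have h : (((0 : ℕ) : ℝ) : HenleRing) = 0 := by norm_num; rfl
    rw [h]
    simp⟩
  one_mem' := ⟨1, by
    have h : (((1 : ℕ) : ℝ) : HenleRing) = 1 := by norm_num; rfl
    rw [h]
    exact ⟨Filter.Germ.const_le (by norm_num : (-1:ℝ) ≤ 1), le_refl _⟩⟩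
  neg_mem' := by
    rintro r ⟨n, h1, h2⟩
    exact ⟨n, neg_le_neg h2, by simpa using neg_le_neg h1⟩
  add_mem' := by
    rintro r s ⟨n, hn1, hn2⟩ ⟨m, hm1, hm2⟩
    have hcast : (((n + m : ℕ) : ℝ)) = ((n : ℝ) + (m : ℝ)) := by push_cast; ring
    refine ⟨n + m, ?_, ?_⟩
    · rw [hcast]
      have h := add_le_add hn1 hm1
      rw [← neg_add] at h
      exact h
    · rw [hcast]
      exact add_le_add hn2 hm2
  mul_mem' := by
    rintro r s ⟨n, hn1, hn2⟩ ⟨m, hm1, hm2⟩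
    obtain ⟨x, rfl⟩ := Quot.exists_rep r
    obtain ⟨y, rfl⟩ := Quot.exists_rep s
    have hx1 : ∀ᶠ k in (Filter.cofinite : Filter ℕ), -(n : ℝ) ≤ x k :=
      Filter.Germ.coe_le.mp hn1
    have hx2 : ∀ᶠ k in (Filter.cofinite : Filter ℕ), x k ≤ (n : ℝ) :=
      Filter.Germ.coe_le.mp hn2
    have hy1 : ∀ᶠ k in (Filter.cofinite : Filter ℕ), -(m : ℝ) ≤ y k :=
      Filter.Germ.coe_le.mp hm1
    have hy2 : ∀ᶠ k in (Filter.cofinite : Filter ℕ), y k ≤ (m : ℝ) :=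
      Filter.Germ.coe_le.mp hm2
    have hcast : (((n * m : ℕ) : ℝ)) = ((n : ℝ) * (m : ℝ)) := by push_cast; ring
    have habs : ∀ᶠ k in (Filter.cofinite : Filter ℕ), |x k * y k| ≤ (n : ℝ) * m := by
      filter_upwards [hx1, hx2, hy1, hy2] with k h1 h2 h3 h4
      rw [abs_mul]
      exact mul_le_mul (abs_le.2 ⟨h1, h2⟩) (abs_le.2 ⟨h3, h4⟩) (abs_nonneg _)
        (Nat.cast_nonneg n)
    refine ⟨n * m, ?_, ?_⟩
    · rw [hcast]
      exact Filter.Germ.coe_le.mpr <| habs.mono fun k hk => by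
        simpa using (abs_le.1 hk).1
    · rw [hcast]
      exact Filter.Germ.coe_le.mpr <| habs.mono fun k hk => (abs_le.1 hk).2

open Filter

def littleO : Set (ℕ → ℝ) :=
  {f : ℕ → ℝ | Filter.Tendsto (fun n : ℕ => (n : ℝ) * f n) Filter.atTop (nhds 0)}

/-- The subring of bounded real sequences. -/
def BddSeq : Subring (ℕ → ℝ) where
  carrier := {f : ℕ → ℝ | ∃ C : ℝ, ∀ n, |f n| ≤ C}
  zero_mem' := ⟨0, fun n => by simp⟩
  one_mem' := ⟨1, fun n => by simp⟩
  add_mem' := by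
    rintro x y ⟨C, hC⟩ ⟨D, hD⟩
    exact ⟨C + D, fun n => (abs_add_le _ _).trans (add_le_add (hC n) (hD n))⟩
  neg_mem' := by
    rintro x ⟨C, hC⟩
    exact ⟨C, fun n => by simpa using hC n⟩
  mul_mem' := by
    rintro x y ⟨C, hC⟩ ⟨D, hD⟩
    refine ⟨C * D, fun n => ?_⟩
    rw [Pi.mul_apply, abs_mul]
    exact mul_le_mul (hC n) (hD n) (abs_nonneg _) ((abs_nonneg _).trans (hC n))

/-- `littleO` as an ideal of the ring of bounded sequences. -/
def littleOIdeal : Ideal BddSeq where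
  carrier := {f : BddSeq | (f : ℕ → ℝ) ∈ littleO}
  zero_mem' := by simp [littleO]
  add_mem' := by
    rintro x y hx hy
    have := hx.add hy
    simp only [littleO, Set.mem_setOf_eq] at *
    simpa [mul_add] using this
  smul_mem' := by
    rintro c x hx
    obtain ⟨C, hC⟩ := c.2
    have h1 : Filter.Tendsto (fun n : ℕ => C * |(n : ℝ) * (x : ℕ → ℝ) n|)
        Filter.atTop (nhds 0) := by
      have := hx.abs.const_mul C
      simpa using this
    refine squeeze_zero_norm (fun n => ?_) h1
    have hcx : ((c • x : BddSeq) : ℕ → ℝ) n = (c : ℕ → ℝ) n * (x : ℕ → ℝ) n := rfl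
    rw [hcx]
    have : ‖(n : ℝ) * ((c : ℕ → ℝ) n * (x : ℕ → ℝ) n)‖
        = |(c : ℕ → ℝ) n| * |(n : ℝ) * (x : ℕ → ℝ) n| := by
      rw [Real.norm_eq_abs, ← abs_mul]; ring_nf
    rw [this]
    exact mul_le_mul_of_nonneg_right (hC n) (abs_nonneg _)

/-- Giordano's ambient ring ℝ̃ = B/o. -/
abbrev GiordanoAmbient : Type := BddSeq ⧸ littleOIdeal

/-- Little-oh polynomials. -/
def LittleOhPoly (x : ℕ → ℝ) : Prop :=
  ∃ (k : ℕ) (r : ℝ) (α a : Fin k → ℝ), (∀ i, 0 ≤ a i) ∧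
    (fun n : ℕ => x n - r - ∑ i, α i * (n : ℝ) ^ (-(a i))) ∈ littleO

lemma littleO_of_eventually_zero {f : ℕ → ℝ}
    (h : ∀ᶠ n in (Filter.cofinite : Filter ℕ), f n = 0) : f ∈ littleO := by
  have h' : ∀ᶠ n in Filter.atTop, f n = 0 := by rwa [Nat.cofinite_eq_atTop] at h
  have : (fun n : ℕ => (n : ℝ) * f n) =ᶠ[Filter.atTop] (fun _ => (0:ℝ)) := by
    filter_upwards [h'] with n hn; simp [hn]
  exact Filter.Tendsto.congr' this.symm tendsto_const_nhds

lemma class_eq (x y : BddSeq)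
    (h : ((x : ℕ → ℝ) : HenleRing) = ((y : ℕ → ℝ) : HenleRing)) :
    Ideal.Quotient.mk littleOIdeal x = Ideal.Quotient.mk littleOIdeal y := by
  rw [Ideal.Quotient.eq]
  have hev : (x : ℕ → ℝ) =ᶠ[(Filter.cofinite : Filter ℕ)] (y : ℕ → ℝ) :=
    Filter.Germ.coe_eq.mp h
  show ((x - y : BddSeq) : ℕ → ℝ) ∈ littleO
  apply littleO_of_eventually_zero
  filter_upwards [hev] with n hn
  have : ((x - y : BddSeq) : ℕ → ℝ) n = (x : ℕ → ℝ) n - (y : ℕ → ℝ) n := rfl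
  rw [this, hn, sub_self]

lemma exists_bdd_rep (r : HenleFinite) :
    ∃ x : BddSeq, ((x : ℕ → ℝ) : HenleRing) = r.1 := by
  obtain ⟨n, h1, h2⟩ := r.2
  obtain ⟨u, hu⟩ := Quot.exists_rep r.1
  have hu' : ((u : ℕ → ℝ) : HenleRing) = r.1 := hu
  have hne : -(((n : ℝ)) : HenleRing) = ((fun _ : ℕ => -(n:ℝ)) : ℕ → ℝ) := rfl
  have hpe : (((n : ℝ)) : HenleRing) = ((fun _ : ℕ => (n:ℝ)) : ℕ → ℝ) := rfl
  rw [← hu'] at h1 h2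
  rw [hne] at h1; rw [hpe] at h2
  have hb1 : ∀ᶠ k in (Filter.cofinite : Filter ℕ), -(n:ℝ) ≤ u k :=
    Filter.Germ.coe_le.mp h1
  have hb2 : ∀ᶠ k in (Filter.cofinite : Filter ℕ), u k ≤ (n:ℝ) :=
    Filter.Germ.coe_le.mp h2
  set v : ℕ → ℝ := fun k => if -(n:ℝ) ≤ u k ∧ u k ≤ (n:ℝ) then u k else 0 with hv
  have hvb : v ∈ BddSeq := by
    refine ⟨(n:ℝ), fun k => ?_⟩
    by_cases h : -(n:ℝ) ≤ u k ∧ u k ≤ (n:ℝ)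
    · simp only [hv, h, if_true]; exact abs_le.2 h
    · simp [hv, h]
  refine ⟨⟨v, hvb⟩, ?_⟩
  rw [← hu']
  apply Filter.Germ.coe_eq.mpr
  filter_upwards [hb1, hb2] with k hk1 hk2
  simp [hv, hk1, hk2]

noncomputable def jmap (r : HenleFinite) : GiordanoAmbient :=
  Ideal.Quotient.mk littleOIdeal (exists_bdd_rep r).choose

lemma jmap_eq (x : BddSeq) (r : HenleFinite)
    (h : ((x : ℕ → ℝ) : HenleRing) = r.1) :
    jmap r = Ideal.Quotient.mk littleOIdeal x :=
  class_eq _ _ ((exists_bdd_rep r).choose_spec.trans h.symm)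

set_option maxHeartbeats 1000000 in
theorem canonical_hom_henle_finite_to_giordano_ambient :
    ∃ i : HenleFinite →+* GiordanoAmbient,
      (∀ (x : ℕ → ℝ) (hb : x ∈ BddSeq) (hf : (↑x : HenleRing) ∈ HenleFinite),
        i ⟨(↑x : HenleRing), hf⟩ = Ideal.Quotient.mk littleOIdeal ⟨x, hb⟩) ∧
      Function.Surjective i ∧
      (∀ x y : ℕ → ℝ, x ∈ BddSeq → y ∈ BddSeq →
        (∀ᶠ n in (Filter.cofinite : Filter ℕ), x n ≤ y n) →
        ∃ z ∈ littleO, ∃ N : ℕ, ∀ n ≥ N, x n ≤ y n + z n) := by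
  classical
  refine ⟨{ toFun := jmap
            map_one' := by
              have : (((1 : BddSeq) : ℕ → ℝ) : HenleRing) = ((1 : HenleFinite) : HenleRing) := rfl
              rw [jmap_eq 1 1 this]; simp
            map_mul' := by
              intro r s
              obtain ⟨xr, hr⟩ := exists_bdd_rep r
              obtain ⟨xs, hs⟩ := exists_bdd_rep s
              have hm : (((xr * xs : BddSeq) : ℕ → ℝ) : HenleRing) = ((r * s : HenleFinite) : HenleRing) := by
                have : ((xr * xs : BddSeq) : ℕ → ℝ) = (xr : ℕ → ℝ) * (xs : ℕ → ℝ) := rfl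
                rw [this]
                show (((xr : ℕ → ℝ) * (xs : ℕ → ℝ) : ℕ → ℝ) : HenleRing) = r.1 * s.1
                rw [← hr, ← hs]; rfl
              show jmap (r * s) = jmap r * jmap s
              rw [jmap_eq _ _ hm, jmap_eq xr r hr, jmap_eq xs s hs, (Ideal.Quotient.mk littleOIdeal).map_mul]
            map_zero' := by
              have : (((0 : BddSeq) : ℕ → ℝ) : HenleRing) = ((0 : HenleFinite) : HenleRing) := rfl
              show jmap 0 = 0
              rw [jmap_eq 0 0 this]; simp
            map_add' := by
              intro r s
              obtain ⟨xr, hr⟩ := exists_bdd_rep r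
              obtain ⟨xs, hs⟩ := exists_bdd_rep s
              have hm : (((xr + xs : BddSeq) : ℕ → ℝ) : HenleRing) = ((r + s : HenleFinite) : HenleRing) := by
                have : ((xr + xs : BddSeq) : ℕ → ℝ) = (xr : ℕ → ℝ) + (xs : ℕ → ℝ) := rfl
                rw [this]
                show (((xr : ℕ → ℝ) + (xs : ℕ → ℝ) : ℕ → ℝ) : HenleRing) = r.1 + s.1
                rw [← hr, ← hs]; rfl
              show jmap (r + s) = jmap r + jmap s
              rw [jmap_eq _ _ hm, jmap_eq xr r hr, jmap_eq xs s hs, (Ideal.Quotient.mk littleOIdeal).map_add] },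
        ?_, ?_, ?_⟩
  · intro x hb hf
    exact jmap_eq ⟨x, hb⟩ ⟨(↑x : HenleRing), hf⟩ rfl
  · intro q
    obtain ⟨x, rfl⟩ := Ideal.Quotient.mk_surjective q
    obtain ⟨C, hC⟩ := x.2
    have hC0 : 0 ≤ C := (abs_nonneg _).trans (hC 0)
    set n : ℕ := ⌈C⌉₊ with hn
    have hCn : C ≤ (n : ℝ) := Nat.le_ceil C
    have hfin : ((x : ℕ → ℝ) : HenleRing) ∈ HenleFinite := by
      refine ⟨n, ?_, ?_⟩
      · have : -(((n : ℝ)) : HenleRing) = ((fun _ : ℕ => -(n:ℝ)) : ℕ → ℝ) := rfl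
        rw [this]
        exact Filter.Germ.coe_le.mpr (Filter.Eventually.of_forall fun k =>
          neg_le_of_abs_le ((hC k).trans hCn))
      · have : (((n : ℝ)) : HenleRing) = ((fun _ : ℕ => (n:ℝ)) : ℕ → ℝ) := rfl
        rw [this]
        exact Filter.Germ.coe_le.mpr (Filter.Eventually.of_forall fun k =>
          le_of_abs_le ((hC k).trans hCn))
    exact ⟨⟨((x : ℕ → ℝ) : HenleRing), hfin⟩, jmap_eq x _ rfl⟩
  · intro x y _ _ hle
    set z : ℕ → ℝ := fun n => if x n ≤ y n then 0 else x n - y n with hz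
    refine ⟨z, ?_, 0, fun n _ => ?_⟩
    · apply littleO_of_eventually_zero
      filter_upwards [hle] with n hn
      simp [hz, hn]
    · by_cases h : x n ≤ y n
      · simp [hz, h]
      · simp [hz, h]
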